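/- Let X ∈ ℝ^{d×n} with n ≥ 1, λ > 0, μ > 0, 0 < p, q < 2, and let Z ∈ ℝ^{n×n} satisfy J(Z, μ) ≤ D for some D > 0. Let M = (ZᵀZ + μ²I)^{p/2−1} and let N be the diagonal matrix with N_{ii} = (‖(XZ − X)_i‖_2² + μ²)^{q/2−1}. Then every eigenvalue of M is at least D^{(p−2)/p} and every diagonal entry of N is at least (D/λ)^{(q−2)/q}; in particular, the smallest eigenvalues of M and N are bounded below by the positive constant θ = min{ D^{(p−2)/p}, (D/λ)^{(q−2)/q} }, which depends only on D, λ, p, q. -/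

import Mathlib

open Matrix

/-- Real power of a real symmetric matrix, defined through the spectral decomposition
`A = U · diag(λ₁,…,λₙ) · Uᵀ` as `A^r = U · diag(λ₁^r,…,λₙ^r) · Uᵀ`
(junk value `0` if `A` is not symmetric). -/
noncomputable def mpow {n : ℕ} (A : Matrix (Fin n) (Fin n) ℝ) (r : ℝ) :
    Matrix (Fin n) (Fin n) ℝ :=
  if hA : A.IsHermitian then hA.cfc (fun x : ℝ => x ^ r) else 0

/-- The smoothed LRR objective
`J(Z, μ) = Tr((ZᵀZ + μ²I)^{p/2}) + λ·∑ᵢ (‖(XZ − X)ᵢ‖₂² + μ²)^{q/2}`,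
where `(XZ − X)ᵢ` denotes the `i`-th column of `XZ − X`. -/
noncomputable def smoothJ {d n : ℕ} (X : Matrix (Fin d) (Fin n) ℝ) (lam p q : ℝ)
    (Z : Matrix (Fin n) (Fin n) ℝ) (μ : ℝ) : ℝ :=
  (mpow (Zᵀ * Z + μ ^ 2 • (1 : Matrix (Fin n) (Fin n) ℝ)) (p / 2)).trace +
    lam * ∑ i, (∑ j, ((X * Z - X) j i) ^ 2 + μ ^ 2) ^ (q / 2)

lemma rpow_half_cancel {x r : ℝ} (hx : 0 ≤ x) (hr : r ≠ 0) : (x ^ (r / 2)) ^ (2 / r) = x := by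
  rw [← Real.rpow_mul hx]
  have : r / 2 * (2 / r) = 1 := by field_simp
  rw [this, Real.rpow_one]

lemma trace_cfc' {n : ℕ} {A : Matrix (Fin n) (Fin n) ℝ} (hA : A.IsHermitian) (f : ℝ → ℝ) :
    (hA.cfc f).trace = ∑ i, f (hA.eigenvalues i) := by
  rw [Matrix.IsHermitian.cfc, Unitary.conjStarAlgAut_apply, Matrix.trace_mul_cycle,
    Unitary.star_mul_self_of_mem (SetLike.coe_mem _), one_mul, Matrix.trace_diagonal]
  simp

lemma spec_cfc' {n : ℕ} {A : Matrix (Fin n) (Fin n) ℝ} (hA : A.IsHermitian) (f : ℝ → ℝ) :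
    spectrum ℝ (hA.cfc f) = Set.range (fun i => f (hA.eigenvalues i)) := by
  rw [Matrix.IsHermitian.cfc, Unitary.conjStarAlgAut_apply, Unitary.spectrum_star_right_conjugate, spectrum_diagonal]
  ext x; simp

/-- Lower bound on the weight matrices: if `J(Z, μ) ≤ D`, then every eigenvalue of
`M = (ZᵀZ + μ²I)^{p/2−1}` is at least `D^{(p−2)/p}`, every diagonal entry of the weight matrix
`N` is at least `(D/λ)^{(q−2)/q}`, and the constant
`θ = min{D^{(p−2)/p}, (D/λ)^{(q−2)/q}}` is positive. -/
theorem stmt_14 {d n : ℕ} (hn : 1 ≤ n) (X : Matrix (Fin d) (Fin n) ℝ) (lam p q μ D : ℝ)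
    (hlam : 0 < lam) (hμ : 0 < μ) (hp0 : 0 < p) (hp2 : p < 2) (hq0 : 0 < q) (hq2 : q < 2)
    (hD : 0 < D) (Z : Matrix (Fin n) (Fin n) ℝ)
    (hJD : smoothJ X lam p q Z μ ≤ D)
    (M N : Matrix (Fin n) (Fin n) ℝ)
    (hM : M = mpow (Zᵀ * Z + μ ^ 2 • (1 : Matrix (Fin n) (Fin n) ℝ)) (p / 2 - 1))
    (hN : N = Matrix.diagonal fun i => (∑ j, ((X * Z - X) j i) ^ 2 + μ ^ 2) ^ (q / 2 - 1)) :
    (∀ hM' : M.IsHermitian, ∀ i, D ^ ((p - 2) / p) ≤ hM'.eigenvalues i) ∧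
      (∀ i, (D / lam) ^ ((q - 2) / q) ≤ N i i) ∧
      0 < min (D ^ ((p - 2) / p)) ((D / lam) ^ ((q - 2) / q)) := by
  set A : Matrix (Fin n) (Fin n) ℝ := Zᵀ * Z + μ ^ 2 • (1 : Matrix (Fin n) (Fin n) ℝ) with hAdef
  have hApd : A.PosDef := by
    refine Matrix.PosDef.posSemidef_add ?_ ?_
    · simpa [Matrix.conjTranspose_eq_transpose_of_trivial] using Matrix.posSemidef_conjTranspose_mul_self Z
    · rw [Matrix.smul_one_eq_diagonal]
      exact Matrix.posDef_diagonal_iff.mpr fun _ => by positivity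
  have hAh : A.IsHermitian := hApd.1
  have hevpos : ∀ j, 0 < hAh.eigenvalues j := hApd.eigenvalues_pos
  -- the second sum is nonnegative, the trace term equals a sum of rpow's
  have hs : ∀ i : Fin n, 0 < ∑ j, ((X * Z - X) j i) ^ 2 + μ ^ 2 := fun i => by positivity
  have hSnonneg : 0 ≤ ∑ i, (∑ j, ((X * Z - X) j i) ^ 2 + μ ^ 2) ^ (q / 2) :=
    Finset.sum_nonneg fun i _ => Real.rpow_nonneg (hs i).le _
  have htr : (mpow A (p / 2)).trace = ∑ j, (hAh.eigenvalues j) ^ (p / 2) := by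
    rw [mpow, dif_pos hAh, trace_cfc' hAh]
  have htrnonneg : 0 ≤ (mpow A (p / 2)).trace := by
    rw [htr]; exact Finset.sum_nonneg fun j _ => Real.rpow_nonneg (hevpos j).le _
  have hJ : smoothJ X lam p q Z μ =
      (mpow A (p / 2)).trace + lam * ∑ i, (∑ j, ((X * Z - X) j i) ^ 2 + μ ^ 2) ^ (q / 2) := rfl
  -- bound eigenvalues of A
  have hevD : ∀ j, hAh.eigenvalues j ≤ D ^ (2 / p) := by
    intro j
    have h1 : (hAh.eigenvalues j) ^ (p / 2) ≤ D := by
      have h2 : (hAh.eigenvalues j) ^ (p / 2) ≤ ∑ j', (hAh.eigenvalues j') ^ (p / 2) :=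
        Finset.single_le_sum (fun j' _ => Real.rpow_nonneg (hevpos j').le _) (Finset.mem_univ j)
      have h3 : (mpow A (p / 2)).trace ≤ D := by
        nlinarith [mul_nonneg hlam.le hSnonneg]
      rw [htr] at h3; linarith
    calc hAh.eigenvalues j = ((hAh.eigenvalues j) ^ (p / 2)) ^ (2 / p) :=
          (rpow_half_cancel (hevpos j).le hp0.ne').symm
      _ ≤ D ^ (2 / p) := Real.rpow_le_rpow (Real.rpow_nonneg (hevpos j).le _) h1 (by positivity)
  -- part 1
  have exp_eq : ∀ r s : ℝ, 0 < r → (r - 2) / r = (2 / r) * (r / 2 - 1) := by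
    intro r s hr; field_simp
  refine ⟨?_, ?_, ?_⟩
  · intro hM' i
    have hMval : M = hAh.cfc (fun x : ℝ => x ^ (p / 2 - 1)) := by
      rw [hM, mpow, dif_pos hAh]
    have hmem : hM'.eigenvalues i ∈
        spectrum ℝ (hAh.cfc fun x : ℝ => x ^ (p / 2 - 1)) := by
      rw [← hMval]; exact hM'.eigenvalues_mem_spectrum_real i
    rw [spec_cfc'] at hmem
    obtain ⟨j, hj⟩ := hmem
    rw [← hj]
    have : D ^ ((p - 2) / p) = (D ^ (2 / p)) ^ (p / 2 - 1) := by
      rw [← Real.rpow_mul hD.le, ← exp_eq p p hp0]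
    rw [this]
    exact Real.rpow_le_rpow_of_nonpos (hevpos j) (hevD j) (by nlinarith)
  · intro i
    rw [hN, Matrix.diagonal_apply_eq]
    have h1 : (∑ j, ((X * Z - X) j i) ^ 2 + μ ^ 2) ^ (q / 2) ≤ D / lam := by
      have h2 : (∑ j, ((X * Z - X) j i) ^ 2 + μ ^ 2) ^ (q / 2) ≤
          ∑ i', (∑ j, ((X * Z - X) j i') ^ 2 + μ ^ 2) ^ (q / 2) :=
        Finset.single_le_sum (fun i' _ => Real.rpow_nonneg (hs i').le _) (Finset.mem_univ i)
      have h3 : lam * ∑ i', (∑ j, ((X * Z - X) j i') ^ 2 + μ ^ 2) ^ (q / 2) ≤ D := by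
        nlinarith
      rw [le_div_iff₀ hlam, mul_comm]
      calc lam * (∑ j, ((X * Z - X) j i) ^ 2 + μ ^ 2) ^ (q / 2)
          ≤ lam * ∑ i', (∑ j, ((X * Z - X) j i') ^ 2 + μ ^ 2) ^ (q / 2) :=
            (mul_le_mul_iff_right₀ hlam).mpr h2
        _ ≤ D := h3
    have hsD : ∑ j, ((X * Z - X) j i) ^ 2 + μ ^ 2 ≤ (D / lam) ^ (2 / q) := by
      calc ∑ j, ((X * Z - X) j i) ^ 2 + μ ^ 2
          = ((∑ j, ((X * Z - X) j i) ^ 2 + μ ^ 2) ^ (q / 2)) ^ (2 / q) :=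
            (rpow_half_cancel (hs i).le hq0.ne').symm
        _ ≤ (D / lam) ^ (2 / q) :=
            Real.rpow_le_rpow (Real.rpow_nonneg (hs i).le _) h1 (by positivity)
    have : (D / lam) ^ ((q - 2) / q) = ((D / lam) ^ (2 / q)) ^ (q / 2 - 1) := by
      rw [← Real.rpow_mul (div_pos hD hlam).le, ← exp_eq q q hq0]
    rw [this]
    exact Real.rpow_le_rpow_of_nonpos (hs i) hsD (by nlinarith)
  · exact lt_min (Real.rpow_pos_of_pos hD _) (Real.rpow_pos_of_pos (div_pos hD hlam) _)
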